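/- If P is an irreducible, aperiodic stochastic matrix on a finite state space with invariant distribution π, then for every initial distribution λ and every state j, Pr(X^t = j) = (λP^t)_j converges to π_j as t → ∞. -/

import Mathlib

open Matrix Filter

section Aux
variable {I : Type*} [Fintype I] [DecidableEq I]

lemma vecMul_apply' (x : I → ℝ) (M : Matrix I I ℝ) (j : I) :
    (x ᵥ* M) j = ∑ i, x i * M i j := by
  rw [Matrix.vecMul, dotProduct]

lemma pow_nonneg' (P : Matrix I I ℝ) (hP0 : ∀ i j, 0 ≤ P i j) :
    ∀ t i j, 0 ≤ (P ^ t) i j := by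
  intro t
  induction t with
  | zero => intro i j; simp [Matrix.one_apply]; positivity
  | succ t ih =>
    intro i j
    rw [pow_succ, Matrix.mul_apply]
    exact Finset.sum_nonneg fun k _ => mul_nonneg (ih i k) (hP0 k j)

lemma pow_rowsum (P : Matrix I I ℝ) (hP1 : ∀ i, ∑ j, P i j = 1) :
    ∀ t i, ∑ j, (P ^ t) i j = 1 := by
  intro t
  induction t with
  | zero => intro i; simp [Matrix.one_apply]
  | succ t ih =>
    intro i
    simp only [pow_succ, Matrix.mul_apply]
    rw [Finset.sum_comm]
    calc ∑ k, ∑ j, (P ^ t) i k * P k j = ∑ k, (P ^ t) i k * ∑ j, P k j := by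
          simp [Finset.mul_sum]
      _ = 1 := by simp [hP1, ih]

lemma pow_entry_ge (P : Matrix I I ℝ) (hP0 : ∀ i j, 0 ≤ P i j) (a b : ℕ) (i k j : I) :
    (P ^ a) i k * (P ^ b) k j ≤ (P ^ (a + b)) i j := by
  rw [pow_add, Matrix.mul_apply]
  exact Finset.single_le_sum (f := fun k => (P ^ a) i k * (P ^ b) k j)
    (fun k _ => mul_nonneg (pow_nonneg' P hP0 a i k) (pow_nonneg' P hP0 b k j))
    (Finset.mem_univ k)

/-- nonexpansiveness of a stochastic matrix in ℓ¹ -/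
lemma l1_nonexpansive (Q : Matrix I I ℝ) (hQ0 : ∀ i j, 0 ≤ Q i j)
    (hQ1 : ∀ i, ∑ j, Q i j = 1) (x : I → ℝ) :
    ∑ j, |(x ᵥ* Q) j| ≤ ∑ i, |x i| := by
  calc ∑ j, |(x ᵥ* Q) j| ≤ ∑ j, ∑ i, |x i| * Q i j := by
        refine Finset.sum_le_sum fun j _ => ?_
        rw [vecMul_apply']
        refine (Finset.abs_sum_le_sum_abs _ _).trans ?_
        refine Finset.sum_le_sum fun i _ => ?_
        rw [abs_mul, abs_of_nonneg (hQ0 i j)]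
    _ = ∑ i, |x i| * ∑ j, Q i j := by rw [Finset.sum_comm]; simp [Finset.mul_sum]
    _ = ∑ i, |x i| := by simp [hQ1]

/-- Doeblin contraction step -/
lemma l1_contraction (Q : Matrix I I ℝ) (hQ1 : ∀ i, ∑ j, Q i j = 1)
    (pi : I → ℝ) (hpi1 : ∑ j, pi j = 1) (δ : ℝ)
    (hmin : ∀ i j, δ * pi j ≤ Q i j)
    (x : I → ℝ) (hx : ∑ i, x i = 0) :
    ∑ j, |(x ᵥ* Q) j| ≤ (1 - δ) * ∑ i, |x i| := by
  have key : ∀ j, (x ᵥ* Q) j = ∑ i, x i * (Q i j - δ * pi j) := by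
    intro j
    rw [vecMul_apply']
    have h0 : ∑ i, x i * (δ * pi j) = 0 := by rw [← Finset.sum_mul, hx, zero_mul]
    calc ∑ i, x i * Q i j = ∑ i, x i * Q i j - ∑ i, x i * (δ * pi j) := by
          rw [h0, sub_zero]
      _ = ∑ i, (x i * Q i j - x i * (δ * pi j)) := by rw [Finset.sum_sub_distrib]
      _ = ∑ i, x i * (Q i j - δ * pi j) := by simp [mul_sub]
  calc ∑ j, |(x ᵥ* Q) j| ≤ ∑ j, ∑ i, |x i| * (Q i j - δ * pi j) := by
        refine Finset.sum_le_sum fun j _ => ?_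
        rw [key j]
        refine (Finset.abs_sum_le_sum_abs _ _).trans ?_
        refine Finset.sum_le_sum fun i _ => ?_
        rw [abs_mul, abs_of_nonneg (sub_nonneg.2 (hmin i j))]
    _ = ∑ i, |x i| * (1 - δ) := by
        rw [Finset.sum_comm]
        refine Finset.sum_congr rfl fun i _ => ?_
        rw [← Finset.mul_sum, Finset.sum_sub_distrib, hQ1, ← Finset.mul_sum, hpi1, mul_one]
    _ = (1 - δ) * ∑ i, |x i| := by rw [← Finset.sum_mul, mul_comm]

end Aux

/-- For an irreducible, aperiodic stochastic matrix on a finite state space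
with invariant distribution `π`, the marginals `Pr(X^t = j) = (λ P^t)_j` converge to `π_j`
as `t → ∞`, for every initial distribution `λ` and every state `j`. -/
theorem convergence_to_invariant {I : Type*} [Fintype I] [DecidableEq I]
    (P : Matrix I I ℝ) (hP0 : ∀ i j, 0 ≤ P i j) (hP1 : ∀ i, ∑ j, P i j = 1)
    (hirr : ∀ i j, ∃ t : ℕ, 0 < (P ^ t) i j)
    (haper : ∀ i, ∃ T : ℕ, ∀ t ≥ T, 0 < (P ^ t) i i)
    (pi : I → ℝ) (hpi0 : ∀ i, 0 ≤ pi i) (hpi1 : ∑ i, pi i = 1)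
    (hinv : pi ᵥ* P = pi)
    (lam : I → ℝ) (hlam0 : ∀ i, 0 ≤ lam i) (hlam1 : ∑ i, lam i = 1) :
    ∀ j, Tendsto (fun t : ℕ => (lam ᵥ* (P ^ t)) j) atTop (nhds (pi j)) := by
  intro j₀
  haveI : Nonempty I := ⟨j₀⟩
  -- Step 1: a power with all entries positive
  choose tt htt using hirr
  choose TT hTT using haper
  obtain ⟨T, hT1, hTbig⟩ : ∃ T : ℕ, 1 ≤ T ∧ ∀ i j, tt i j + TT i ≤ T := by
    refine ⟨max 1 ((Finset.univ : Finset (I × I)).sup fun p => tt p.1 p.2 + TT p.1),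
      le_max_left _ _, fun i j => le_trans ?_ (le_max_right _ _)⟩
    exact Finset.le_sup (f := fun p : I × I => tt p.1 p.2 + TT p.1) (Finset.mem_univ (i, j))
  have hTpos : ∀ i j, 0 < (P ^ T) i j := by
    intro i j
    have h1 : T = (T - tt i j) + tt i j := by have := hTbig i j; omega
    have h2 : TT i ≤ T - tt i j := by have := hTbig i j; omega
    have := pow_entry_ge P hP0 (T - tt i j) (tt i j) i i j
    rw [← h1] at this
    exact lt_of_lt_of_le (mul_pos (hTT i _ h2) (htt i j)) this
  set Q := P ^ T with hQ
  have hQ0 : ∀ i j, 0 ≤ Q i j := pow_nonneg' P hP0 T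
  have hQ1 : ∀ i, ∑ j, Q i j = 1 := pow_rowsum P hP1 T
  -- δ : minimal entry of Q
  set δ : ℝ := (Finset.univ : Finset (I × I)).inf' (Finset.univ_nonempty) (fun p => Q p.1 p.2)
    with hδ
  have hδle : ∀ i j, δ ≤ Q i j := fun i j =>
    Finset.inf'_le (fun p : I × I => Q p.1 p.2) (Finset.mem_univ (i, j))
  have hδpos : 0 < δ := by
    rw [hδ, Finset.lt_inf'_iff]
    exact fun p _ => hTpos p.1 p.2
  have hδ1 : δ ≤ 1 := by
    refine (hδle j₀ j₀).trans ?_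
    rw [← hQ1 j₀]
    exact Finset.single_le_sum (fun k _ => hQ0 j₀ k) (Finset.mem_univ j₀)
  have hpile1 : ∀ k, pi k ≤ 1 := by
    intro k
    rw [← hpi1]
    exact Finset.single_le_sum (fun i _ => hpi0 i) (Finset.mem_univ k)
  have hmin : ∀ i k, δ * pi k ≤ Q i k := fun i k =>
    le_trans (by nlinarith [hpi0 k, hpile1 k]) (hδle i k)
  -- the difference vector and its ℓ¹ norm along time
  set x : I → ℝ := lam - pi with hx
  have hxsum : ∑ i, x i = 0 := by
    simp [hx, Finset.sum_sub_distrib, hlam1, hpi1]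
  set f : ℕ → ℝ := fun t => ∑ k, |(x ᵥ* (P ^ t)) k| with hf
  have hsucc : ∀ t, x ᵥ* P ^ (t + 1) = (x ᵥ* P ^ t) ᵥ* P := by
    intro t; rw [Matrix.vecMul_vecMul, ← pow_succ]
  have hsumconst : ∀ (y : I → ℝ) (M : Matrix I I ℝ), (∀ i, ∑ k, M i k = 1) →
      ∑ k, (y ᵥ* M) k = ∑ i, y i := by
    intro y M hM
    simp only [vecMul_apply']
    rw [Finset.sum_comm]
    calc ∑ i, ∑ k, y i * M i k = ∑ i, y i * ∑ k, M i k := by simp [Finset.mul_sum]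
      _ = ∑ i, y i := by simp [hM]
  have hxt_sum : ∀ t, ∑ k, (x ᵥ* P ^ t) k = 0 := by
    intro t
    rw [hsumconst _ _ (pow_rowsum P hP1 t), hxsum]
  have hmono : ∀ s t, s ≤ t → f t ≤ f s := by
    intro s t hst
    induction t with
    | zero => simp_all
    | succ t ih =>
      rcases Nat.lt_or_ge s (t + 1) with h | h
      · refine le_trans ?_ (ih (by omega))
        show f (t + 1) ≤ f t
        simp only [hf, hsucc]
        exact l1_nonexpansive P hP0 hP1 _
      · have : s = t + 1 := by omega
        simp [this]
  have hcontr : ∀ t, f (t + T) ≤ (1 - δ) * f t := by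
    intro t
    have : x ᵥ* P ^ (t + T) = (x ᵥ* P ^ t) ᵥ* Q := by
      rw [hQ, Matrix.vecMul_vecMul, ← pow_add]
    simp only [hf, this]
    exact l1_contraction Q hQ1 pi hpi1 δ hmin _ (hxt_sum t)
  have hgeo : ∀ k r, f (k * T + r) ≤ (1 - δ) ^ k * f r := by
    intro k
    induction k with
    | zero => intro r; simp
    | succ k ih =>
      intro r
      have h1 : (k + 1) * T + r = (k * T + r) + T := by ring
      calc f ((k + 1) * T + r) = f ((k * T + r) + T) := by rw [h1]
        _ ≤ (1 - δ) * f (k * T + r) := hcontr _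
        _ ≤ (1 - δ) * ((1 - δ) ^ k * f r) := by
            refine mul_le_mul_of_nonneg_left (ih r) (by linarith)
        _ = (1 - δ) ^ (k + 1) * f r := by ring
  have hf0 : ∀ t, 0 ≤ f t := fun t => Finset.sum_nonneg fun k _ => abs_nonneg _
  have hbound : ∀ t, f t ≤ (1 - δ) ^ (t / T) * f 0 := by
    intro t
    have ht : (t / T) * T + t % T = t := by
      rw [mul_comm]; exact Nat.div_add_mod t T
    calc f t = f ((t / T) * T + t % T) := by rw [ht]
      _ ≤ (1 - δ) ^ (t / T) * f (t % T) := hgeo _ _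
      _ ≤ (1 - δ) ^ (t / T) * f 0 := by
          exact mul_le_mul_of_nonneg_left (hmono 0 _ (Nat.zero_le _))
            (pow_nonneg (by linarith) _)
  -- convergence of the bound to 0
  have hdiv : Tendsto (fun t : ℕ => t / T) atTop atTop := by
    refine tendsto_atTop_atTop.2 fun b => ⟨b * T, fun a ha => ?_⟩
    rw [Nat.le_div_iff_mul_le (by omega)]
    exact ha
  have hpow : Tendsto (fun t : ℕ => (1 - δ) ^ (t / T) * f 0) atTop (nhds 0) := by
    have h1 : Tendsto (fun k : ℕ => (1 - δ) ^ k) atTop (nhds 0) :=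
      tendsto_pow_atTop_nhds_zero_of_lt_one (by linarith) (by linarith)
    have := (h1.comp hdiv).mul_const (f 0)
    simpa using this
  -- coordinatewise convergence
  have hcoord : Tendsto (fun t : ℕ => (x ᵥ* P ^ t) j₀) atTop (nhds 0) := by
    refine squeeze_zero_norm (fun t => ?_) hpow
    calc ‖(x ᵥ* P ^ t) j₀‖ = |(x ᵥ* P ^ t) j₀| := rfl
      _ ≤ f t := Finset.single_le_sum (f := fun k => |(x ᵥ* P ^ t) k|)
          (fun k _ => abs_nonneg _) (Finset.mem_univ j₀)
      _ ≤ (1 - δ) ^ (t / T) * f 0 := hbound t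
  have hpiinv : ∀ t, pi ᵥ* P ^ t = pi := by
    intro t
    induction t with
    | zero => simp
    | succ t ih => rw [pow_succ, ← Matrix.vecMul_vecMul, ih, hinv]
  have heq : ∀ t, (lam ᵥ* P ^ t) j₀ = (x ᵥ* P ^ t) j₀ + pi j₀ := by
    intro t
    rw [hx, Matrix.sub_vecMul, hpiinv t]
    simp
  simp only [heq]
  simpa using hcoord.add_const (pi j₀)
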